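/- Let X₁, …, Xₙ be independent centered random variables with P(|Xᵢ| ≥ t) ≤ t^{−α} for t ≥ 1, where α > 2, and let a₁, …, aₙ be real coefficients. Then there is a constant C_α depending only on α such that for all p ∈ [2, α), (E[|∑ᵢ aᵢ Xᵢ|^p])^{1/p} ≤ C_α (∑ᵢ aᵢ²)^{1/2} (α/(α − p))^{1/p}. -/

import Mathlib

open MeasureTheory Real ProbabilityTheory

open Set

lemma LFMB.exp_le_quadratic {c x : ℝ} (hx : x ≤ c) (hc : 0 ≤ c) :
    Real.exp x ≤ 1 + x + x ^ 2 * Real.exp c := by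
  have hec : (1:ℝ) ≤ Real.exp c := Real.one_le_exp hc
  rcases le_or_gt x 0 with hx0 | hx0
  · -- exp x ≤ 1 + x + x^2/2 for x ≤ 0
    set f : ℝ → ℝ := fun y => 1 + y + y ^ 2 / 2 - Real.exp y with hf
    have hd : ∀ y : ℝ, HasDerivAt f (1 + y - Real.exp y) y := by
      intro y
      have h1 : HasDerivAt f (0 + 1 + (2 : ℕ) * y ^ (2 - 1) / 2 - Real.exp y) y :=
        (((hasDerivAt_const y (1:ℝ)).add (hasDerivAt_id y)).add
          ((hasDerivAt_pow 2 y).div_const 2)).sub (Real.hasDerivAt_exp y)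
      convert h1 using 1
      push_cast
      ring
    have hanti : Antitone f := by
      apply antitone_of_deriv_nonpos
      · exact fun y => (hd y).differentiableAt
      · intro y
        rw [(hd y).deriv]
        have := Real.add_one_le_exp y
        linarith
    have h0 : f 0 = 0 := by simp [hf]
    have := hanti hx0
    rw [h0] at this
    have hfx : Real.exp x ≤ 1 + x + x ^ 2 / 2 := by simp only [hf] at this; linarith
    nlinarith [sq_nonneg x]
  · -- 0 < x : use g y = y^2 exp y + 1 + y - exp y ≥ 0 on [0,∞)
    set g : ℝ → ℝ := fun y => y ^ 2 * Real.exp y + 1 + y - Real.exp y with hg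
    have hd : ∀ y : ℝ, HasDerivAt g ((2 : ℕ) * y ^ (2-1) * Real.exp y + y ^ 2 * Real.exp y
        + 1 - Real.exp y) y := by
      intro y
      have h1 := ((hasDerivAt_pow 2 y).mul (Real.hasDerivAt_exp y)).add (hasDerivAt_const y (1:ℝ))
      have h2 := (h1.add (hasDerivAt_id y)).sub (Real.hasDerivAt_exp y)
      refine h2.congr_deriv ?_
      push_cast
      ring
    have hmono : MonotoneOn g (Set.Ici (0:ℝ)) := by
      apply monotoneOn_of_deriv_nonneg (convex_Ici 0)
      · exact (Continuous.continuousOn (by fun_prop))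
      · intro y hy
        exact ((hd y).differentiableAt).differentiableWithinAt
      · intro y hy
        rw [interior_Ici] at hy
        rw [(hd y).deriv]
        have hy0 : (0:ℝ) < y := hy
        have hkey : Real.exp y - 1 ≤ y * Real.exp y := by
          have := Real.add_one_le_exp (-y)
          have h3 : (1 - y) * Real.exp y ≤ 1 := by
            have h5 := mul_le_mul_of_nonneg_right this (Real.exp_pos y).le
            rw [← Real.exp_add, neg_add_cancel, Real.exp_zero] at h5
            linarith
          nlinarith
        push_cast
        nlinarith [Real.exp_pos y, sq_nonneg y]
    have h0 : g 0 = 0 := by simp [hg]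
    have := hmono (Set.self_mem_Ici) (Set.mem_Ici.mpr hx0.le) hx0.le
    rw [h0] at this
    simp only [hg] at this
    have hxx : x ^ 2 * Real.exp x ≤ x ^ 2 * Real.exp c := by
      have := Real.exp_le_exp.mpr hx
      nlinarith [sq_nonneg x]
    linarith

lemma LFMB.integrable_of_bdd {Ω : Type} [MeasurableSpace Ω] {μ : Measure Ω}
    [IsFiniteMeasure μ] {f : Ω → ℝ} (hm : Measurable f) {b : ℝ}
    (h : ∀ ω, |f ω| ≤ b) : Integrable f μ :=
  Integrable.mono' (integrable_const b) hm.aestronglyMeasurable (by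
    filter_upwards with ω; simpa [Real.norm_eq_abs] using h ω)

lemma LFMB.mgf_bound {Ω : Type} [MeasurableSpace Ω] (μ : Measure Ω) [IsProbabilityMeasure μ]
    {V : Ω → ℝ} (hm : Measurable V) {b : ℝ} (hb : 0 ≤ b) (hbd : ∀ ω, |V ω| ≤ b)
    (hcen : ∫ ω, V ω ∂μ = 0) {l : ℝ} (hl : 0 ≤ l) :
    ∫ ω, Real.exp (l * V ω) ∂μ
      ≤ Real.exp (l ^ 2 * (∫ ω, (V ω) ^ 2 ∂μ) * Real.exp (l * b)) := by
  have hVint : Integrable V μ := LFMB.integrable_of_bdd hm hbd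
  have hV2int : Integrable (fun ω => (V ω) ^ 2) μ := by
    refine LFMB.integrable_of_bdd (hm.pow_const 2) (b := b ^ 2) fun ω => ?_
    rw [abs_pow, sq_abs, ← sq_abs]
    exact pow_le_pow_left₀ (abs_nonneg _) (hbd ω) 2
  have hpoint : ∀ ω, Real.exp (l * V ω) ≤ 1 + l * V ω + (l ^ 2 * Real.exp (l * b)) * (V ω) ^ 2 := by
    intro ω
    have h1 : l * V ω ≤ l * b :=
      mul_le_mul_of_nonneg_left ((abs_le.mp (hbd ω)).2) hl
    have := LFMB.exp_le_quadratic h1 (mul_nonneg hl hb)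
    calc Real.exp (l * V ω) ≤ 1 + l * V ω + (l * V ω) ^ 2 * Real.exp (l * b) := this
      _ = 1 + l * V ω + (l ^ 2 * Real.exp (l * b)) * (V ω) ^ 2 := by ring
  have hexpint : Integrable (fun ω => Real.exp (l * V ω)) μ := by
    refine LFMB.integrable_of_bdd (by fun_prop) (b := Real.exp (l * b)) fun ω => ?_
    rw [abs_of_nonneg (Real.exp_pos _).le]
    exact Real.exp_le_exp.mpr (mul_le_mul_of_nonneg_left ((abs_le.mp (hbd ω)).2) hl)
  have hRint : Integrable (fun ω => 1 + l * V ω + (l ^ 2 * Real.exp (l * b)) * (V ω) ^ 2) μ :=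
    (integrable_const _ |>.add (hVint.const_mul l)).add (hV2int.const_mul _)
  calc ∫ ω, Real.exp (l * V ω) ∂μ
      ≤ ∫ ω, (1 + l * V ω + (l ^ 2 * Real.exp (l * b)) * (V ω) ^ 2) ∂μ :=
        integral_mono hexpint hRint hpoint
    _ = 1 + (l ^ 2 * Real.exp (l * b)) * ∫ ω, (V ω) ^ 2 ∂μ := by
        have h1int : Integrable (fun ω => 1 + l * V ω) μ :=
          (integrable_const 1).add (hVint.const_mul l)
        have h2int : Integrable (fun ω => (l ^ 2 * Real.exp (l * b)) * (V ω) ^ 2) μ :=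
          hV2int.const_mul _
        have h3int : Integrable (fun ω => l * V ω) μ := hVint.const_mul l
        rw [integral_add h1int h2int, integral_add (integrable_const 1) h3int,
          integral_const_mul, integral_const_mul, hcen]
        simp
    _ ≤ Real.exp (l ^ 2 * (∫ ω, (V ω) ^ 2 ∂μ) * Real.exp (l * b)) := by
        have := Real.add_one_le_exp (l ^ 2 * (∫ ω, (V ω) ^ 2 ∂μ) * Real.exp (l * b))
        linarith

lemma LFMB.chernoff_sum {Ω : Type} [MeasurableSpace Ω] (μ : Measure Ω) [IsProbabilityMeasure μ]
    {n : ℕ} {V : Fin n → Ω → ℝ} (hm : ∀ i, Measurable (V i))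
    (hind : iIndepFun V μ)
    {b : ℝ} (hb : 0 ≤ b) (hbd : ∀ i ω, |V i ω| ≤ b)
    (hcen : ∀ i, ∫ ω, V i ω ∂μ = 0)
    {s : ℝ} (hs : ∑ i, ∫ ω, (V i ω) ^ 2 ∂μ ≤ s)
    {l u : ℝ} (hl : 0 ≤ l) :
    (μ {ω | u ≤ ∑ i, V i ω}).toReal ≤ Real.exp (l ^ 2 * s * Real.exp (l * b) - l * u) := by
  have hSm : Measurable (fun ω => ∑ i, V i ω) := Finset.measurable_sum _ fun i _ => hm i
  have hsum_bd : ∀ ω, |∑ i, V i ω| ≤ n * b := by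
    intro ω
    calc |∑ i, V i ω| ≤ ∑ i, |V i ω| := Finset.abs_sum_le_sum_abs _ _
      _ ≤ ∑ _i : Fin n, b := Finset.sum_le_sum fun i _ => hbd i ω
      _ = n * b := by simp [Finset.sum_const, nsmul_eq_mul]
  have hint : Integrable (fun ω => Real.exp (l * ∑ i, V i ω)) μ := by
    refine LFMB.integrable_of_bdd (by fun_prop) (b := Real.exp (l * (n * b))) fun ω => ?_
    rw [abs_of_nonneg (Real.exp_pos _).le]
    exact Real.exp_le_exp.mpr (mul_le_mul_of_nonneg_left ((abs_le.mp (hsum_bd ω)).2) hl)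
  have key := measure_ge_le_exp_mul_mgf (X := fun ω => ∑ i, V i ω) (μ := μ) u hl hint
  have hmgf : mgf (fun ω => ∑ i, V i ω) μ l = ∏ i, mgf (V i) μ l := by
    have hfn : (fun ω => ∑ i, V i ω) = ∑ i, V i := by
      funext ω; simp [Finset.sum_apply]
    rw [hfn, hind.mgf_sum hm Finset.univ]
  have hconst : (0:ℝ) ≤ l ^ 2 * Real.exp (l * b) := by positivity
  have hprod : ∏ i, mgf (V i) μ l
      ≤ Real.exp (l ^ 2 * s * Real.exp (l * b)) := by
    calc ∏ i, mgf (V i) μ l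
        ≤ ∏ i, Real.exp (l ^ 2 * (∫ ω, (V i ω) ^ 2 ∂μ) * Real.exp (l * b)) := by
          refine Finset.prod_le_prod (fun i _ => mgf_nonneg) fun i _ => ?_
          exact LFMB.mgf_bound μ (hm i) hb (hbd i) (hcen i) hl
      _ = Real.exp (∑ i, l ^ 2 * (∫ ω, (V i ω) ^ 2 ∂μ) * Real.exp (l * b)) := by
          rw [Real.exp_sum]
      _ ≤ Real.exp (l ^ 2 * s * Real.exp (l * b)) := by
          apply Real.exp_le_exp.mpr
          have : ∑ i, l ^ 2 * (∫ ω, (V i ω) ^ 2 ∂μ) * Real.exp (l * b)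
              = (l ^ 2 * Real.exp (l * b)) * ∑ i, ∫ ω, (V i ω) ^ 2 ∂μ := by
            rw [Finset.mul_sum]; congr 1; funext i; ring
          rw [this]
          calc (l ^ 2 * Real.exp (l * b)) * ∑ i, ∫ ω, (V i ω) ^ 2 ∂μ
              ≤ (l ^ 2 * Real.exp (l * b)) * s := mul_le_mul_of_nonneg_left hs hconst
            _ = l ^ 2 * s * Real.exp (l * b) := by ring
  calc (μ {ω | u ≤ ∑ i, V i ω}).toReal
      ≤ Real.exp (-l * u) * mgf (fun ω => ∑ i, V i ω) μ l := key
    _ ≤ Real.exp (-l * u) * Real.exp (l ^ 2 * s * Real.exp (l * b)) := by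
        rw [hmgf]
        exact mul_le_mul_of_nonneg_left hprod (Real.exp_pos _).le
    _ = Real.exp (l ^ 2 * s * Real.exp (l * b) - l * u) := by
        rw [← Real.exp_add]; ring_nf

lemma LFMB.moment_from_tail {Ω : Type} [MeasurableSpace Ω] (μ : Measure Ω)
    [IsProbabilityMeasure μ] {f : Ω → ℝ} (hm : Measurable f)
    {α K q : ℝ} (hK : 1 ≤ K) (hq : 0 < q) (hqα : q < α)
    (htail : ∀ t : ℝ, 0 < t → μ {ω | t ≤ |f ω|} ≤ ENNReal.ofReal (K * t ^ (-α))) :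
    ∫⁻ ω, ENNReal.ofReal (|f ω| ^ q) ∂μ
      ≤ ENNReal.ofReal (K ^ (q / α) * (α / (α - q))) := by
  have hα0 : 0 < α := lt_trans hq hqα
  have hK0 : 0 < K := lt_of_lt_of_le one_pos hK
  set T : ℝ := K ^ (α⁻¹) with hTdef
  have hT1 : 1 ≤ T := by
    calc (1:ℝ) = 1 ^ (α⁻¹) := (Real.one_rpow _).symm
      _ ≤ K ^ (α⁻¹) := Real.rpow_le_rpow zero_le_one hK (by positivity)
  have hT0 : 0 < T := lt_of_lt_of_le one_pos hT1
  have hTα : T ^ α = K := by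
    rw [hTdef, ← Real.rpow_mul hK0.le, inv_mul_cancel₀ hα0.ne', Real.rpow_one]
  have hTq : T ^ q = K ^ (q / α) := by
    rw [hTdef, ← Real.rpow_mul hK0.le]
    congr 1
    field_simp
  -- layer cake
  have f_nn : 0 ≤ᵐ[μ] fun ω => |f ω| := ae_of_all _ fun ω => abs_nonneg _
  rw [MeasureTheory.lintegral_rpow_eq_lintegral_meas_le_mul μ f_nn hm.abs.aemeasurable hq]
  have hsplit : (Ioi (0:ℝ)) = Ioc 0 T ∪ Ioi T := (Ioc_union_Ioi_eq_Ioi hT0.le).symm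
  rw [hsplit, lintegral_union measurableSet_Ioi (Set.Ioc_disjoint_Ioi le_rfl)]
  -- piece 1
  have h1 : ∫⁻ t in Ioc 0 T, μ {a | t ≤ |f a|} * ENNReal.ofReal (t ^ (q-1))
      ≤ ENNReal.ofReal (T ^ q / q) := by
    have hb : ∫⁻ t in Ioc 0 T, μ {a | t ≤ |f a|} * ENNReal.ofReal (t ^ (q-1))
        ≤ ∫⁻ t in Ioc 0 T, ENNReal.ofReal (t ^ (q-1)) := by
      refine lintegral_mono fun t => ?_
      calc μ {a | t ≤ |f a|} * ENNReal.ofReal (t ^ (q-1))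
          ≤ 1 * ENNReal.ofReal (t ^ (q-1)) := mul_le_mul_left prob_le_one _
        _ = ENNReal.ofReal (t ^ (q-1)) := one_mul _
    refine hb.trans ?_
    have hint : IntegrableOn (fun t : ℝ => t ^ (q-1)) (Ioc 0 T) := by
      have := (intervalIntegral.intervalIntegrable_rpow' (a := 0) (b := T) (r := q - 1) (by linarith))
      rwa [intervalIntegrable_iff_integrableOn_Ioc_of_le hT0.le] at this
    have hnn : 0 ≤ᵐ[volume.restrict (Ioc 0 T)] fun t : ℝ => t ^ (q-1) := by
      filter_upwards [ae_restrict_mem measurableSet_Ioc] with t ht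
      exact Real.rpow_nonneg ht.1.le _
    rw [← ofReal_integral_eq_lintegral_ofReal hint hnn]
    apply ENNReal.ofReal_le_ofReal
    rw [← intervalIntegral.integral_of_le hT0.le,
      integral_rpow (Or.inl (by linarith : (-1:ℝ) < q - 1))]
    rw [Real.zero_rpow (by linarith : q - 1 + 1 ≠ 0)]
    simp [sub_add_cancel]
  -- piece 2
  have h2 : ∫⁻ t in Ioi T, μ {a | t ≤ |f a|} * ENNReal.ofReal (t ^ (q-1))
      ≤ ENNReal.ofReal (K * (T ^ (q - α) / (α - q))) := by
    have hb : ∫⁻ t in Ioi T, μ {a | t ≤ |f a|} * ENNReal.ofReal (t ^ (q-1))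
        ≤ ∫⁻ t in Ioi T, ENNReal.ofReal (K * t ^ (q - 1 - α)) := by
      refine setLIntegral_mono' measurableSet_Ioi fun t ht => ?_
      have ht0 : 0 < t := lt_trans hT0 ht
      calc μ {a | t ≤ |f a|} * ENNReal.ofReal (t ^ (q-1))
          ≤ ENNReal.ofReal (K * t ^ (-α)) * ENNReal.ofReal (t ^ (q-1)) :=
            mul_le_mul_left (htail t ht0) _
        _ = ENNReal.ofReal (K * t ^ (q - 1 - α)) := by
            rw [← ENNReal.ofReal_mul (by positivity)]
            congr 1
            rw [mul_assoc, ← Real.rpow_add ht0]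
            ring_nf
    refine hb.trans ?_
    have hexp : q - 1 - α < -1 := by linarith
    have hint : IntegrableOn (fun t : ℝ => K * t ^ (q - 1 - α)) (Ioi T) :=
      (integrableOn_Ioi_rpow_of_lt hexp hT0).const_mul K
    have hnn : 0 ≤ᵐ[volume.restrict (Ioi T)] fun t : ℝ => K * t ^ (q - 1 - α) := by
      filter_upwards [ae_restrict_mem measurableSet_Ioi] with t ht
      have : (0:ℝ) < t := lt_trans hT0 ht
      positivity
    rw [← ofReal_integral_eq_lintegral_ofReal hint hnn]
    apply ENNReal.ofReal_le_ofReal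
    rw [MeasureTheory.integral_const_mul, integral_Ioi_rpow_of_lt hexp hT0]
    apply le_of_eq
    rw [show q - 1 - α + 1 = q - α by ring]
    have hne1 : q - α ≠ 0 := by linarith
    have hne2 : α - q ≠ 0 := by linarith
    field_simp
    ring
  refine le_trans (mul_le_mul_right (add_le_add h1 h2) (ENNReal.ofReal q)) ?_
  have hnn1 : (0:ℝ) ≤ T ^ q / q := by positivity
  have hnn2 : (0:ℝ) ≤ K * (T ^ (q - α) / (α - q)) :=
    mul_nonneg hK0.le (div_nonneg (Real.rpow_nonneg hT0.le _) (by linarith))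
  rw [← ENNReal.ofReal_add hnn1 hnn2, ← ENNReal.ofReal_mul hq.le]
  apply le_of_eq
  congr 1
  have hKT : K * T ^ (q - α) = T ^ q := by
    rw [← hTα, ← Real.rpow_add hT0]
    congr 1
    ring
  rw [← mul_div_assoc, hKT, ← hTq]
  have hne : α - q ≠ 0 := by linarith
  field_simp
  ring

noncomputable def LFMB.K (α : ℝ) : ℝ :=
  (8 * α) ^ α + 2 + ((32 * α * (α / (α - 2))) ^ 2) ^ α

-- minor helper : each X i has a clean tail bound for all t > 0
lemma LFMB.tail_all {Ω : Type} [MeasurableSpace Ω] {μ : Measure Ω}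
    [IsProbabilityMeasure μ] {α : ℝ} (hα : 0 < α) {f : Ω → ℝ}
    (htail : ∀ t ≥ (1 : ℝ), (μ {ω | t ≤ |f ω|}).toReal ≤ t ^ (-α)) :
    ∀ t : ℝ, 0 < t → μ {ω | t ≤ |f ω|} ≤ ENNReal.ofReal ((1:ℝ) * t ^ (-α)) := by
  intro t ht
  rw [one_mul]
  rcases le_or_gt 1 t with h1 | h1
  · exact (ENNReal.le_ofReal_iff_toReal_le (measure_ne_top _ _)
      (Real.rpow_nonneg ht.le _)).mpr (htail t h1)
  · calc μ {ω | t ≤ |f ω|} ≤ 1 := prob_le_one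
      _ = ENNReal.ofReal ((t:ℝ) ^ (0:ℝ)) := by rw [Real.rpow_zero]; simp
      _ ≤ ENNReal.ofReal (t ^ (-α)) := ENNReal.ofReal_le_ofReal
          (Real.rpow_le_rpow_of_exponent_ge ht h1.le (by linarith))

-- second moment bound
lemma LFMB.sq_int {Ω : Type} [MeasurableSpace Ω] {μ : Measure Ω}
    [IsProbabilityMeasure μ] {α : ℝ} (hα : 2 < α) {f : Ω → ℝ} (hm : Measurable f)
    (htail : ∀ t ≥ (1 : ℝ), (μ {ω | t ≤ |f ω|}).toReal ≤ t ^ (-α)) :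
    Integrable (fun ω => (f ω) ^ 2) μ ∧ ∫ ω, (f ω) ^ 2 ∂μ ≤ α / (α - 2) := by
  have hα0 : (0:ℝ) < α := by linarith
  have h := LFMB.moment_from_tail μ hm (le_refl (1:ℝ)) (by norm_num : (0:ℝ) < 2)
    hα (LFMB.tail_all hα0 htail)
  rw [Real.one_rpow, one_mul] at h
  have hconv : ∀ ω, ENNReal.ofReal (|f ω| ^ (2:ℝ)) = ENNReal.ofReal ((f ω) ^ 2) := by
    intro ω
    congr 1
    rw [show (2:ℝ) = ((2:ℕ):ℝ) by norm_num, Real.rpow_natCast, sq_abs]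
  simp_rw [hconv] at h
  have hnn : 0 ≤ᵐ[μ] fun ω => (f ω) ^ 2 := ae_of_all _ fun ω => sq_nonneg _
  have hfin : HasFiniteIntegral (fun ω => (f ω) ^ 2) μ := by
    rw [hasFiniteIntegral_iff_ofReal hnn]
    exact lt_of_le_of_lt h ENNReal.ofReal_lt_top
  have hint : Integrable (fun ω => (f ω) ^ 2) μ :=
    ⟨(hm.pow_const 2).aestronglyMeasurable, hfin⟩
  refine ⟨hint, ?_⟩
  rw [← ofReal_integral_eq_lintegral_ofReal hint hnn] at h
  exact (ENNReal.ofReal_le_ofReal_iff (div_nonneg (by linarith) (by linarith))).mp h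

set_option maxHeartbeats 2000000 in
open Set in
lemma LFMB.nagaev_tail {Ω : Type} [MeasurableSpace Ω] (μ : Measure Ω)
    [IsProbabilityMeasure μ] {α : ℝ} (hα : 2 < α)
    {n : ℕ} {X : Fin n → Ω → ℝ} (hmeas : ∀ i, Measurable (X i))
    (hind : iIndepFun X μ)
    (hint : ∀ i, Integrable (X i) μ) (hcen : ∀ i, ∫ ω, X i ω ∂μ = 0)
    (htail : ∀ i, ∀ t ≥ (1 : ℝ), (μ {ω | t ≤ |X i ω|}).toReal ≤ t ^ (-α))
    {a : Fin n → ℝ} (ha : ∑ i, a i ^ 2 = 1) :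
    ∀ t : ℝ, 0 < t →
      μ {ω | t ≤ |∑ i, a i * X i ω|} ≤ ENNReal.ofReal (LFMB.K α * t ^ (-α)) := by
  have hα0 : (0:ℝ) < α := by linarith
  set σ2 : ℝ := α / (α - 2) with hσ2def
  have hσ2 : 1 ≤ σ2 := by
    rw [hσ2def, le_div_iff₀ (by linarith)]
    linarith
  have hσ2pos : 0 < σ2 := lt_of_lt_of_le one_pos hσ2
  set T : ℝ := (32 * α * σ2) ^ 2 with hTdef
  have hbase : (64:ℝ) ≤ 32 * α * σ2 := by nlinarith
  have hT1 : (1:ℝ) ≤ T := by nlinarith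
  have h32nn : (0:ℝ) ≤ 32 * α * σ2 := by linarith
  have hT1' : (1:ℝ) < T := by nlinarith
  have hTnn : (0:ℝ) ≤ T := by linarith
  have hT16 : 16 * α * σ2 ≤ T := by nlinarith
  have hKval : LFMB.K α = (8 * α) ^ α + 2 + T ^ α := rfl
  have hKge : T ^ α ≤ LFMB.K α := by
    rw [hKval]
    have h1 : (0:ℝ) ≤ (8 * α) ^ α := Real.rpow_nonneg (by linarith) _
    linarith
  -- per-variable facts
  have hX2 : ∀ i, Integrable (fun ω => (X i ω) ^ 2) μ ∧ ∫ ω, (X i ω) ^ 2 ∂μ ≤ σ2 :=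
    fun i => LFMB.sq_int hα (hmeas i) (htail i)
  -- individual tails for a i * X i
  have haone : ∀ i, |a i| ≤ 1 := by
    intro i
    rw [← sq_le_one_iff_abs_le_one]
    calc a i ^ 2 ≤ ∑ j, a j ^ 2 :=
        Finset.single_le_sum (fun j _ => sq_nonneg (a j)) (Finset.mem_univ i)
      _ = 1 := ha
  have hterm : ∀ i, |a i| ^ α ≤ a i ^ 2 := by
    intro i
    rcases eq_or_ne (a i) 0 with h0 | h0
    · rw [h0, abs_zero, Real.zero_rpow hα0.ne']; positivity
    · have h1 : |a i| ^ α ≤ |a i| ^ (2:ℝ) :=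
        Real.rpow_le_rpow_of_exponent_ge (abs_pos.mpr h0) (haone i) (by linarith)
      rwa [show (2:ℝ) = ((2:ℕ):ℝ) by norm_num, Real.rpow_natCast, sq_abs] at h1
  have hsum_abs_pow : (∑ i, |a i| ^ α) ≤ 1 := by
    rw [← ha]
    exact Finset.sum_le_sum fun i _ => hterm i
  have hatail : ∀ i, ∀ y : ℝ, 0 < y →
      μ {ω | y ≤ |a i * X i ω|} ≤ ENNReal.ofReal (|a i| ^ α / y ^ α) := by
    intro i y hy
    rcases eq_or_ne (a i) 0 with h0 | h0
    · have : {ω | y ≤ |a i * X i ω|} = (∅ : Set Ω) := by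
        ext ω; simp [h0, not_le, hy]
      rw [this, measure_empty]
      exact bot_le
    · have hai : 0 < |a i| := abs_pos.mpr h0
      have hev : {ω | y ≤ |a i * X i ω|} = {ω | y / |a i| ≤ |X i ω|} := by
        ext ω
        rw [Set.mem_setOf_eq, Set.mem_setOf_eq, abs_mul, div_le_iff₀ hai]  -- may need le_div_iff
        constructor
        · intro h; nlinarith
        · intro h; nlinarith
      rw [hev]
      rcases le_or_gt 1 (y / |a i|) with h1 | h1
      · have hb := htail i (y / |a i|) h1
        have heq : (y / |a i|) ^ (-α) = |a i| ^ α / y ^ α := by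
          rw [Real.rpow_neg (by positivity), Real.div_rpow hy.le hai.le]
          rw [inv_div]
        rw [← heq]
        exact (ENNReal.le_ofReal_iff_toReal_le (measure_ne_top _ _)
          (Real.rpow_nonneg (by positivity) _)).mpr hb
      · calc μ {ω | y / |a i| ≤ |X i ω|} ≤ 1 := prob_le_one
          _ ≤ ENNReal.ofReal (|a i| ^ α / y ^ α) := by
              rw [← ENNReal.ofReal_one]
              apply ENNReal.ofReal_le_ofReal
              rw [le_div_iff₀ (by positivity), one_mul]
              calc y ^ α = (y / |a i| * |a i|) ^ α := by rw [div_mul_cancel₀ _ hai.ne']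
                _ = (y / |a i|) ^ α * |a i| ^ α := Real.mul_rpow (by positivity) hai.le
                _ ≤ 1 * |a i| ^ α := by
                    apply mul_le_mul_of_nonneg_right _ (Real.rpow_nonneg hai.le _)
                    exact Real.rpow_le_one (by positivity) h1.le hα0.le
                _ = |a i| ^ α := one_mul _
  intro t ht
  rcases lt_or_ge t T with htT | htT
  · -- small t: trivial bound by 1
    calc μ {ω | t ≤ |∑ i, a i * X i ω|} ≤ 1 := prob_le_one
      _ ≤ ENNReal.ofReal (LFMB.K α * t ^ (-α)) := by
          rw [← ENNReal.ofReal_one]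
          apply ENNReal.ofReal_le_ofReal
          have hTt : 1 ≤ T / t := by rw [le_div_iff₀ ht]; linarith
          have h2 : (1:ℝ) ≤ (T / t) ^ α := Real.one_le_rpow hTt hα0.le
          have h3 : (T / t) ^ α = T ^ α * t ^ (-α) := by
            rw [Real.div_rpow hTnn ht.le, Real.rpow_neg ht.le, div_eq_mul_inv]
          have h4 : T ^ α * t ^ (-α) ≤ LFMB.K α * t ^ (-α) :=
            mul_le_mul_of_nonneg_right hKge (Real.rpow_nonneg ht.le _)
          linarith [h2, h3 ▸ h2]
  · -- main case : t ≥ T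
    have ht1 : (1:ℝ) < t := lt_of_lt_of_le hT1' htT
    have hlogt : 0 ≤ Real.log t := Real.log_nonneg ht1.le
    set y : ℝ := t / (8 * α) with hydef
    have hy : 0 < y := div_pos ht (by linarith)
    set g : Fin n → ℝ → ℝ := fun i x => if |a i * x| ≤ y then a i * x else 0 with hgdef
    have hgm : ∀ i, Measurable (g i) := by
      intro i
      exact Measurable.ite
        (measurableSet_le (measurable_id.const_mul (a i)).abs measurable_const)
        (measurable_id.const_mul (a i)) measurable_const
    set W : Fin n → Ω → ℝ := fun i ω => g i (X i ω) with hWdef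
    have hWm : ∀ i, Measurable (W i) := fun i => (hgm i).comp (hmeas i)
    have hWbd : ∀ i ω, |W i ω| ≤ y := by
      intro i ω
      by_cases h : |a i * X i ω| ≤ y
      · simp only [hWdef, hgdef]; rw [if_pos h]; exact h
      · simp only [hWdef, hgdef]; rw [if_neg h]; simp [hy.le]
    have hWint : ∀ i, Integrable (W i) μ := fun i => LFMB.integrable_of_bdd (hWm i) (hWbd i)
    set m : Fin n → ℝ := fun i => ∫ ω, W i ω ∂μ with hmdef
    have haX2int : ∀ i, Integrable (fun ω => (a i * X i ω) ^ 2) μ := by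
      intro i
      have h1 := ((hX2 i).1.const_mul ((a i) ^ 2))
      refine h1.congr ?_
      filter_upwards with ω
      ring
    have haX2val : ∀ i, ∫ ω, (a i * X i ω) ^ 2 ∂μ ≤ (a i) ^ 2 * σ2 := by
      intro i
      have heq : ∫ ω, (a i * X i ω) ^ 2 ∂μ = (a i) ^ 2 * ∫ ω, (X i ω) ^ 2 ∂μ := by
        rw [← integral_const_mul]
        congr 1; funext ω; ring
      rw [heq]
      exact mul_le_mul_of_nonneg_left (hX2 i).2 (sq_nonneg _)
    have hm_abs : ∀ i, |m i| ≤ (a i) ^ 2 * σ2 / y := by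
      intro i
      have hdiff : m i = ∫ ω, (W i ω - a i * X i ω) ∂μ := by
        rw [integral_sub (hWint i) ((hint i).const_mul (a i)), integral_const_mul, hcen i,
          mul_zero, sub_zero]
      have hptw : ∀ ω, |W i ω - a i * X i ω| ≤ (a i * X i ω) ^ 2 / y := by
        intro ω
        by_cases h : |a i * X i ω| ≤ y
        · have : W i ω = a i * X i ω := if_pos h
          rw [this, sub_self, abs_zero]
          positivity
        · push_neg at h
          have hW0 : W i ω = 0 := if_neg (not_le.mpr h)
          rw [hW0, zero_sub, abs_neg, le_div_iff₀ hy]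
          nlinarith [abs_nonneg (a i * X i ω), sq_abs (a i * X i ω)]
      calc |m i| = |∫ ω, (W i ω - a i * X i ω) ∂μ| := by rw [← hdiff]
        _ ≤ ∫ ω, |W i ω - a i * X i ω| ∂μ := by
            simpa [Real.norm_eq_abs] using
              norm_integral_le_integral_norm (fun ω => W i ω - a i * X i ω) (μ := μ)
        _ ≤ ∫ ω, (a i * X i ω) ^ 2 / y ∂μ :=
            integral_mono ((hWint i).sub ((hint i).const_mul (a i))).abs
              ((haX2int i).div_const y) hptw
        _ = (∫ ω, (a i * X i ω) ^ 2 ∂μ) / y := integral_div y _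
        _ ≤ (a i) ^ 2 * σ2 / y := by
            gcongr
            exact haX2val i
    set V : Fin n → Ω → ℝ := fun i ω => W i ω - m i with hVdef
    have hVm : ∀ i, Measurable (V i) := fun i => (hWm i).sub measurable_const
    have hmy : ∀ i, |m i| ≤ y := by
      intro i
      calc |m i| ≤ ∫ ω, |W i ω| ∂μ := by
            simpa [Real.norm_eq_abs] using norm_integral_le_integral_norm (W i) (μ := μ)
        _ ≤ ∫ _ω, y ∂μ := integral_mono (hWint i).abs (integrable_const y) (hWbd i)
        _ = y := by simp
    have hVbd : ∀ i ω, |V i ω| ≤ 2 * y := by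
      intro i ω
      calc |V i ω| ≤ |W i ω| + |m i| := abs_sub _ _
        _ ≤ y + y := add_le_add (hWbd i ω) (hmy i)
        _ = 2 * y := by ring
    have hVcen : ∀ i, ∫ ω, V i ω ∂μ = 0 := by
      intro i
      rw [hVdef]
      rw [integral_sub (hWint i) (integrable_const _), integral_const]
      simp [hmdef]
    have hW2int : ∀ i, Integrable (fun ω => (W i ω) ^ 2) μ := by
      intro i
      refine LFMB.integrable_of_bdd ((hWm i).pow_const 2) (b := y ^ 2) fun ω => ?_
      rw [abs_pow, sq_abs, ← sq_abs]
      exact pow_le_pow_left₀ (abs_nonneg _) (hWbd i ω) 2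
    have hV2int : ∀ i, Integrable (fun ω => (V i ω) ^ 2) μ := by
      intro i
      refine LFMB.integrable_of_bdd ((hVm i).pow_const 2) (b := (2 * y) ^ 2) fun ω => ?_
      rw [abs_pow, sq_abs, ← sq_abs]
      exact pow_le_pow_left₀ (abs_nonneg _) (hVbd i ω) 2
    have hV2 : ∀ i, ∫ ω, (V i ω) ^ 2 ∂μ ≤ (a i) ^ 2 * σ2 := by
      intro i
      have hexp : (fun ω => (V i ω) ^ 2)
          = fun ω => (W i ω) ^ 2 - (2 * m i) * W i ω + (m i) ^ 2 := by
        funext ω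
        rw [hVdef]
        ring
      have hval : ∫ ω, (V i ω) ^ 2 ∂μ = (∫ ω, (W i ω) ^ 2 ∂μ) - (m i) ^ 2 := by
        have hi1 : Integrable (fun ω => (W i ω) ^ 2 - (2 * m i) * W i ω) μ :=
          (hW2int i).sub ((hWint i).const_mul _)
        have hi2 : Integrable (fun ω => (2 * m i) * W i ω) μ := (hWint i).const_mul _
        rw [hexp, integral_add hi1 (integrable_const ((m i) ^ 2)),
          integral_sub (hW2int i) hi2, integral_const_mul, integral_const]
        have : ∫ ω, W i ω ∂μ = m i := rfl
        rw [this]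
        simp
        ring
      have hWle : ∫ ω, (W i ω) ^ 2 ∂μ ≤ ∫ ω, (a i * X i ω) ^ 2 ∂μ := by
        refine integral_mono (hW2int i) (haX2int i) fun ω => ?_
        by_cases h : |a i * X i ω| ≤ y
        · have : W i ω = a i * X i ω := if_pos h
          rw [this]
        · have : W i ω = 0 := if_neg h
          rw [this]
          simpa using sq_nonneg (a i * X i ω)
      have := haX2val i
      nlinarith [sq_nonneg (m i)]
    have hsumV2 : (∑ i, ∫ ω, (V i ω) ^ 2 ∂μ) ≤ σ2 := by
      calc (∑ i, ∫ ω, (V i ω) ^ 2 ∂μ) ≤ ∑ i, (a i) ^ 2 * σ2 :=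
          Finset.sum_le_sum fun i _ => hV2 i
        _ = σ2 := by rw [← Finset.sum_mul, ha, one_mul]
    have hVind : iIndepFun V μ := by
      have h := hind.comp (fun i x => g i x - m i) (fun i => (hgm i).sub measurable_const)
      exact h
    have hVnegind : iIndepFun (fun i ω => -(V i ω)) μ := by
      have h := hVind.comp (fun _ x => -x) (fun _ => measurable_neg)
      exact h
    -- choice of the Chernoff parameter
    set l : ℝ := 4 * α * Real.log t / t with hldef
    have hl : 0 ≤ l := div_nonneg (mul_nonneg (by linarith) hlogt) ht.le
    have hexpo : l ^ 2 * σ2 * Real.exp (l * (2 * y)) - l * (t / 2) ≤ -α * Real.log t := by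
      have hl2y : l * (2 * y) = Real.log t := by
        rw [hldef, hydef]
        field_simp
        ring
      rw [hl2y, Real.exp_log ht]
      have hsq : Real.log t ≤ 2 * Real.sqrt t := by
        have h1 := Real.log_le_sub_one_of_pos (Real.sqrt_pos.mpr ht)
        have h2 : Real.log (Real.sqrt t) = Real.log t / 2 := Real.log_sqrt ht.le
        linarith [Real.sqrt_nonneg t]
      have hsqT : 32 * α * σ2 ≤ Real.sqrt t := by
        have h0 : Real.sqrt T = 32 * α * σ2 := by
          rw [hTdef, Real.sqrt_sq h32nn]
        calc 32 * α * σ2 = Real.sqrt T := h0.symm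
          _ ≤ Real.sqrt t := Real.sqrt_le_sqrt htT
      have hkey : 16 * α * σ2 * Real.log t ≤ t := by
        have h3 : 16 * α * σ2 * Real.log t ≤ 16 * α * σ2 * (2 * Real.sqrt t) :=
          mul_le_mul_of_nonneg_left hsq (by linarith)
        have h4 : 32 * α * σ2 * Real.sqrt t ≤ Real.sqrt t * Real.sqrt t :=
          mul_le_mul_of_nonneg_right hsqT (Real.sqrt_nonneg t)
        have h5 : Real.sqrt t * Real.sqrt t = t := Real.mul_self_sqrt ht.le
        linarith
      have hgoal : l ^ 2 * σ2 * t - l * (t / 2)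
          = 16 * α ^ 2 * (Real.log t) ^ 2 * σ2 / t - 2 * α * Real.log t := by
        rw [hldef]
        field_simp
        ring
      rw [hgoal]
      have h6 : 16 * α ^ 2 * (Real.log t) ^ 2 * σ2 / t ≤ α * Real.log t := by
        rw [div_le_iff₀ ht]
        linarith [mul_le_mul_of_nonneg_left hkey (mul_nonneg hα0.le hlogt)]
      linarith
    have hcher : ∀ (U : Fin n → Ω → ℝ), (∀ i, Measurable (U i)) →
        iIndepFun U μ → (∀ i ω, |U i ω| ≤ 2 * y) →
        (∀ i, ∫ ω, U i ω ∂μ = 0) → ((∑ i, ∫ ω, (U i ω) ^ 2 ∂μ) ≤ σ2) →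
        μ {ω | t / 2 ≤ ∑ i, U i ω} ≤ ENNReal.ofReal (t ^ (-α)) := by
      intro U hUm hUind hUbd hUcen hUs
      have hch := LFMB.chernoff_sum μ hUm hUind (by linarith : (0:ℝ) ≤ 2 * y)
        hUbd hUcen hUs (l := l) (u := t / 2) hl
      have hle : Real.exp (l ^ 2 * σ2 * Real.exp (l * (2 * y)) - l * (t / 2)) ≤ t ^ (-α) := by
        calc Real.exp (l ^ 2 * σ2 * Real.exp (l * (2 * y)) - l * (t / 2))
            ≤ Real.exp (-α * Real.log t) := Real.exp_le_exp.mpr hexpo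
          _ = t ^ (-α) := by rw [Real.rpow_def_of_pos ht, mul_comm]
      exact (ENNReal.le_ofReal_iff_toReal_le (measure_ne_top _ _)
        (Real.rpow_nonneg ht.le _)).mpr (hch.trans hle)
    have habs : μ {ω | t / 2 ≤ |∑ i, V i ω|} ≤ ENNReal.ofReal (2 * t ^ (-α)) := by
      have hsub : {ω | t / 2 ≤ |∑ i, V i ω|}
          ⊆ {ω | t / 2 ≤ ∑ i, V i ω} ∪ {ω | t / 2 ≤ ∑ i, -(V i ω)} := by
        intro ω hω
        rw [Set.mem_setOf_eq] at hω
        rcases le_abs.mp hω with h | h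
        · exact Set.mem_union_left _ h
        · refine Set.mem_union_right _ ?_
          rw [Set.mem_setOf_eq, ← Finset.sum_neg_distrib] at *
          exact h.trans_eq rfl
      have hneg := hcher (fun i ω => -(V i ω)) (fun i => (hVm i).neg) hVnegind
        (fun i ω => by rw [abs_neg]; exact hVbd i ω)
        (fun i => by rw [integral_neg, hVcen i, neg_zero])
        (by simpa [neg_pow] using hsumV2)
      have hpos := hcher V hVm hVind hVbd hVcen hsumV2
      calc μ {ω | t / 2 ≤ |∑ i, V i ω|}
          ≤ μ ({ω | t / 2 ≤ ∑ i, V i ω} ∪ {ω | t / 2 ≤ ∑ i, -(V i ω)}) := measure_mono hsub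
        _ ≤ μ {ω | t / 2 ≤ ∑ i, V i ω} + μ {ω | t / 2 ≤ ∑ i, -(V i ω)} := measure_union_le _ _
        _ ≤ ENNReal.ofReal (t ^ (-α)) + ENNReal.ofReal (t ^ (-α)) := add_le_add hpos hneg
        _ = ENNReal.ofReal (2 * t ^ (-α)) := by
            rw [← ENNReal.ofReal_add (Real.rpow_nonneg ht.le _) (Real.rpow_nonneg ht.le _)]
            congr 1
            ring
    have hMbd : |∑ i, m i| ≤ t / 2 := by
      have h1 : (∑ i, |m i|) ≤ σ2 / y := by
        calc (∑ i, |m i|) ≤ ∑ i, (a i) ^ 2 * σ2 / y :=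
            Finset.sum_le_sum fun i _ => hm_abs i
          _ = (∑ i, (a i) ^ 2) * σ2 / y := by rw [← Finset.sum_div, ← Finset.sum_mul]
          _ = σ2 / y := by rw [ha, one_mul]
      have h2 : σ2 / y ≤ t / 2 := by
        rw [hydef, div_div_eq_mul_div, div_le_div_iff₀ (by linarith) (by norm_num)]
        linarith [hT16, htT, mul_le_mul_of_nonneg_left ht1.le ht.le]
      calc |∑ i, m i| ≤ ∑ i, |m i| := Finset.abs_sum_le_sum_abs _ _
        _ ≤ σ2 / y := h1
        _ ≤ t / 2 := h2
    have hincl : {ω | t ≤ |∑ i, a i * X i ω|}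
        ⊆ (⋃ i, {ω | y < |a i * X i ω|}) ∪ {ω | t / 2 ≤ |∑ i, V i ω|} := by
      intro ω hω
      rw [Set.mem_setOf_eq] at hω
      by_cases hcase : ∀ i, |a i * X i ω| ≤ y
      · refine Set.mem_union_right _ ?_
        rw [Set.mem_setOf_eq]
        have hWeq : ∀ i, W i ω = a i * X i ω := fun i => if_pos (hcase i)
        have hsum : (∑ i, V i ω) = (∑ i, a i * X i ω) - ∑ i, m i := by
          rw [hVdef]
          rw [Finset.sum_sub_distrib]
          congr 1
          exact Finset.sum_congr rfl fun i _ => hWeq i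
        rw [hsum]
        calc t / 2 = t - t / 2 := by ring
          _ ≤ |∑ i, a i * X i ω| - |∑ i, m i| := by
              have := hMbd
              linarith
          _ ≤ |(∑ i, a i * X i ω) - ∑ i, m i| := abs_sub_abs_le_abs_sub _ _
      · refine Set.mem_union_left _ ?_
        push_neg at hcase
        obtain ⟨i, hi⟩ := hcase
        exact Set.mem_iUnion.mpr ⟨i, hi⟩
    have htails : μ (⋃ i, {ω | y < |a i * X i ω|})
        ≤ ENNReal.ofReal ((8 * α) ^ α * t ^ (-α)) := by
      have hstep : ∀ i : Fin n, μ {ω | y < |a i * X i ω|}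
          ≤ ENNReal.ofReal (|a i| ^ α / y ^ α) := by
        intro i
        refine le_trans (measure_mono ?_) (hatail i y hy)
        exact fun ω (h : y < |a i * X i ω|) => le_of_lt h
      have hval : (∑ i, |a i| ^ α / y ^ α) ≤ (8 * α) ^ α * t ^ (-α) := by
        have hs : (∑ i, |a i| ^ α / y ^ α) ≤ 1 / y ^ α := by
          rw [← Finset.sum_div]
          exact (div_le_div_iff_of_pos_right (Real.rpow_pos_of_pos hy α)).mpr hsum_abs_pow
        have hyα : 1 / y ^ α = (8 * α) ^ α * t ^ (-α) := by
          rw [hydef, Real.div_rpow ht.le (by linarith : (0:ℝ) ≤ 8 * α), one_div_div,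
            Real.rpow_neg ht.le, div_eq_mul_inv]
        linarith [hs, hyα ▸ hs]
      calc μ (⋃ i, {ω | y < |a i * X i ω|}) ≤ ∑ i, μ {ω | y < |a i * X i ω|} :=
          measure_iUnion_fintype_le _ _
        _ ≤ ∑ i, ENNReal.ofReal (|a i| ^ α / y ^ α) := Finset.sum_le_sum fun i _ => hstep i
        _ = ENNReal.ofReal (∑ i, |a i| ^ α / y ^ α) := by
            rw [ENNReal.ofReal_sum_of_nonneg fun i _ => by positivity]
        _ ≤ ENNReal.ofReal ((8 * α) ^ α * t ^ (-α)) := ENNReal.ofReal_le_ofReal hval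
    calc μ {ω | t ≤ |∑ i, a i * X i ω|}
        ≤ μ ((⋃ i, {ω | y < |a i * X i ω|}) ∪ {ω | t / 2 ≤ |∑ i, V i ω|}) := measure_mono hincl
      _ ≤ μ (⋃ i, {ω | y < |a i * X i ω|}) + μ {ω | t / 2 ≤ |∑ i, V i ω|} :=
          measure_union_le _ _
      _ ≤ ENNReal.ofReal ((8 * α) ^ α * t ^ (-α)) + ENNReal.ofReal (2 * t ^ (-α)) :=
          add_le_add htails habs
      _ = ENNReal.ofReal (((8 * α) ^ α + 2) * t ^ (-α)) := by
          rw [← ENNReal.ofReal_add (by positivity) (by positivity)]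
          congr 1
          ring
      _ ≤ ENNReal.ofReal (LFMB.K α * t ^ (-α)) := by
          apply ENNReal.ofReal_le_ofReal
          apply mul_le_mul_of_nonneg_right _ (Real.rpow_nonneg ht.le _)
          rw [hKval]
          have : (0:ℝ) ≤ T ^ α := Real.rpow_nonneg hTnn _
          linarith

lemma LFMB.one_le_K {α : ℝ} (hα : 2 < α) : 1 ≤ LFMB.K α := by
  have h1 : (0:ℝ) ≤ (8 * α) ^ α := Real.rpow_nonneg (by linarith) _
  have h2 : (0:ℝ) ≤ ((32 * α * (α / (α - 2))) ^ 2) ^ α := Real.rpow_nonneg (sq_nonneg _) _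
  unfold LFMB.K
  linarith


/-- Moment bound for linear forms in independent centered heavy-tailed random variables:
there is C_α depending only on α such that for p ∈ [2,α),
‖∑ aᵢ Xᵢ‖_{L^p} ≤ C_α (∑ aᵢ²)^{1/2} (α/(α−p))^{1/p}. -/
theorem linear_form_moment_bound (α : ℝ) (hα : 2 < α) :
    ∃ C > 0, ∀ {Ω : Type} [MeasurableSpace Ω] (μ : Measure Ω), IsProbabilityMeasure μ →
      ∀ (n : ℕ) (X : Fin n → Ω → ℝ), (∀ i, Measurable (X i)) →
        iIndepFun X μ →
        (∀ i, Integrable (X i) μ) → (∀ i, ∫ ω, X i ω ∂μ = 0) →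
        (∀ i, ∀ t ≥ (1:ℝ), (μ {ω | t ≤ |X i ω|}).toReal ≤ t ^ (-α)) →
        ∀ (a : Fin n → ℝ), ∀ p ∈ Set.Ico (2 : ℝ) α,
          (∫⁻ ω, ENNReal.ofReal (|∑ i, a i * X i ω| ^ p) ∂μ) ^ (1 / p)
            ≤ ENNReal.ofReal (C * (∑ i, a i ^ 2) ^ ((1:ℝ)/2) * (α / (α - p)) ^ (1 / p)) := by
  have hK1 : 1 ≤ LFMB.K α := LFMB.one_le_K hα
  have hK0 : 0 < LFMB.K α := lt_of_lt_of_le one_pos hK1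
  refine ⟨LFMB.K α, hK0, ?_⟩
  intro Ω _inst μ hprob n X hmeas hind hint hcen htail a p hp
  haveI := hprob
  obtain ⟨hp2, hpα⟩ := hp
  have hp0 : (0:ℝ) < p := by linarith
  have hα0 : (0:ℝ) < α := by linarith
  have hαp : (0:ℝ) < α - p := by linarith
  rcases eq_or_ne (∑ i, a i ^ 2) 0 with hzero | hne
  · -- degenerate case: all coefficients vanish
    have hai : ∀ i, a i = 0 := by
      intro i
      have h1 := (Finset.sum_eq_zero_iff_of_nonneg
        (fun j _ => sq_nonneg (a j))).mp hzero i (Finset.mem_univ i)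
      exact pow_eq_zero_iff (two_ne_zero) |>.mp h1
    have hS : ∀ ω, (∑ i, a i * X i ω) = 0 := fun ω =>
      Finset.sum_eq_zero fun i _ => by rw [hai i, zero_mul]
    have h0 : (∫⁻ ω, ENNReal.ofReal (|∑ i, a i * X i ω| ^ p) ∂μ) = 0 := by
      have hfn : (fun ω => ENNReal.ofReal (|∑ i, a i * X i ω| ^ p)) = fun _ => 0 :=
        funext fun ω => by rw [hS ω, abs_zero, Real.zero_rpow hp0.ne', ENNReal.ofReal_zero]
      rw [hfn, lintegral_zero]
    rw [h0, ENNReal.zero_rpow_of_pos (by positivity : (0:ℝ) < 1/p)]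
    exact bot_le
  · have hsq_pos : 0 < ∑ i, a i ^ 2 :=
      lt_of_le_of_ne (Finset.sum_nonneg fun i _ => sq_nonneg _) (Ne.symm hne)
    set r : ℝ := Real.sqrt (∑ i, a i ^ 2) with hrdef
    have hr : 0 < r := Real.sqrt_pos.mpr hsq_pos
    have hr2 : r ^ 2 = ∑ i, a i ^ 2 := Real.sq_sqrt hsq_pos.le
    set b : Fin n → ℝ := fun i => a i / r with hbdef
    have hb1 : (∑ i, b i ^ 2) = 1 := by
      simp only [hbdef, div_pow]
      rw [← Finset.sum_div, ← hr2, div_self (pow_ne_zero 2 hr.ne')]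
    have htail_b := LFMB.nagaev_tail μ hα hmeas hind hint hcen htail hb1
    have hfm : Measurable (fun ω => ∑ i, b i * X i ω) :=
      Finset.measurable_sum _ fun i _ => (hmeas i).const_mul _
    have hmom := LFMB.moment_from_tail μ hfm hK1 hp0 hpα htail_b
    have hrel : ∀ ω, |∑ i, a i * X i ω| ^ p = r ^ p * |∑ i, b i * X i ω| ^ p := by
      intro ω
      have h1 : (∑ i, a i * X i ω) = r * ∑ i, b i * X i ω := by
        rw [Finset.mul_sum]
        refine Finset.sum_congr rfl fun i _ => ?_
        rw [hbdef]
        field_simp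
      rw [h1, abs_mul, abs_of_pos hr, Real.mul_rpow hr.le (abs_nonneg _)]
    have hsplit : (∫⁻ ω, ENNReal.ofReal (|∑ i, a i * X i ω| ^ p) ∂μ)
        = ENNReal.ofReal (r ^ p) * ∫⁻ ω, ENNReal.ofReal (|∑ i, b i * X i ω| ^ p) ∂μ := by
      rw [← lintegral_const_mul' _ _ ENNReal.ofReal_ne_top]
      congr 1
      funext ω
      rw [hrel ω, ENNReal.ofReal_mul (Real.rpow_nonneg hr.le _)]
    rw [hsplit, ENNReal.mul_rpow_of_nonneg _ _ (by positivity : (0:ℝ) ≤ 1/p)]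
    have hfac1 : (ENNReal.ofReal (r ^ p)) ^ ((1:ℝ)/p) = ENNReal.ofReal r := by
      rw [ENNReal.ofReal_rpow_of_pos (Real.rpow_pos_of_pos hr p),
        ← Real.rpow_mul hr.le, mul_one_div, div_self hp0.ne', Real.rpow_one]
    have hfac2 : (∫⁻ ω, ENNReal.ofReal (|∑ i, b i * X i ω| ^ p) ∂μ) ^ ((1:ℝ)/p)
        ≤ ENNReal.ofReal (LFMB.K α ^ ((1:ℝ)/α) * (α / (α - p)) ^ ((1:ℝ)/p)) := by
      refine le_trans (ENNReal.rpow_le_rpow hmom (by positivity)) ?_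
      rw [ENNReal.ofReal_rpow_of_pos (by positivity)]
      apply ENNReal.ofReal_le_ofReal
      rw [Real.mul_rpow (Real.rpow_nonneg hK0.le _) (by positivity),
        ← Real.rpow_mul hK0.le]
      have : p / α * (1 / p) = 1 / α := by field_simp
      rw [this]
    calc (ENNReal.ofReal (r ^ p)) ^ ((1:ℝ)/p)
          * (∫⁻ ω, ENNReal.ofReal (|∑ i, b i * X i ω| ^ p) ∂μ) ^ ((1:ℝ)/p)
        ≤ ENNReal.ofReal r
            * ENNReal.ofReal (LFMB.K α ^ ((1:ℝ)/α) * (α / (α - p)) ^ ((1:ℝ)/p)) := by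
          rw [hfac1]
          exact mul_le_mul_right hfac2 _
      _ = ENNReal.ofReal (r * (LFMB.K α ^ ((1:ℝ)/α) * (α / (α - p)) ^ ((1:ℝ)/p))) := by
          rw [← ENNReal.ofReal_mul hr.le]
      _ ≤ ENNReal.ofReal (LFMB.K α * (∑ i, a i ^ 2) ^ ((1:ℝ)/2) * (α / (α - p)) ^ (1/p)) := by
          apply ENNReal.ofReal_le_ofReal
          have hreq : (∑ i, a i ^ 2) ^ ((1:ℝ)/2) = r := (Real.sqrt_eq_rpow _).symm ▸ rfl
          have hKle : LFMB.K α ^ ((1:ℝ)/α) ≤ LFMB.K α := by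
            calc LFMB.K α ^ ((1:ℝ)/α) ≤ LFMB.K α ^ (1:ℝ) :=
                Real.rpow_le_rpow_of_exponent_le hK1 (by
                  rw [div_le_one hα0]; linarith)
              _ = LFMB.K α := Real.rpow_one _
          rw [hreq]
          have hcnn : (0:ℝ) ≤ (α / (α - p)) ^ ((1:ℝ)/p) :=
            Real.rpow_nonneg (by positivity) _
          calc r * (LFMB.K α ^ ((1:ℝ)/α) * (α / (α - p)) ^ ((1:ℝ)/p))
              ≤ r * (LFMB.K α * (α / (α - p)) ^ ((1:ℝ)/p)) := by
                apply mul_le_mul_of_nonneg_left _ hr.le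
                exact mul_le_mul_of_nonneg_right hKle hcnn
            _ = LFMB.K α * r * (α / (α - p)) ^ (1/p) := by ring
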